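/- arXiv:math/0202184 — 3 statements merged into one kernel-verified Lean document; each statement's English description precedes it below -/
import Mathlib

section
/- For every n ≥ 1, the zigzag module Z_n is an indecomposable R-module. (Indecomposability of the type I modules of Gelfand–Ponomarev, as used in Lemma 1.3.) -/
/-- A subspace invariant under the two operators `a`, `b` (i.e. a submodule for
the module structure they define). -/
def RInvariant {V : Type} [AddCommGroup V] [Module ℂ V] (a b : Module.End ℂ V)
    (p : Submodule ℂ V) : Prop :=
  ∀ v ∈ p, a v ∈ p ∧ b v ∈ p

/-- A module (given by a vector space with two operators `a`, `b`) is
indecomposable if it is nonzero and is not the internal direct sum of two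
nonzero invariant subspaces. -/
def RIndecomposable {V : Type} [AddCommGroup V] [Module ℂ V]
    (a b : Module.End ℂ V) : Prop :=
  (∃ v : V, v ≠ 0) ∧ ∀ p q : Submodule ℂ V, RInvariant a b p → RInvariant a b q →
    IsCompl p q → p = ⊥ ∨ q = ⊥

/-- An isomorphism of modules given by pairs of endomorphisms: a linear
equivalence intertwining the respective actions. -/
def RModIso {V W : Type} [AddCommGroup V] [Module ℂ V] [AddCommGroup W] [Module ℂ W]
    (a b : Module.End ℂ V) (a' b' : Module.End ℂ W) : Prop :=
  ∃ e : V ≃ₗ[ℂ] W, (∀ v, e (a v) = a' (e v)) ∧ (∀ v, e (b v) = b' (e v))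

/-- The action of `a` on the zigzag module `Z_n`: on the basis `e₁, …, eₙ`
(here indexed by `Fin n`, with `i : Fin n` standing for `e_{i+1}`),
`a·e_i = e_{i+1}` for odd `i < n` (1-indexed), all other basis vectors mapped
to zero. -/
noncomputable def zigzagA (n : ℕ) : Module.End ℂ (Fin n → ℂ) :=
  Matrix.toLin' (Matrix.of fun j i : Fin n =>
    if (j : ℕ) = (i : ℕ) + 1 ∧ (i : ℕ) % 2 = 0 then 1 else 0)

/-- The action of `b` on the zigzag module `Z_n`: `b·e_i = e_{i−1}` for odd
`i > 1` (1-indexed), all other basis vectors mapped to zero. -/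
noncomputable def zigzagB (n : ℕ) : Module.End ℂ (Fin n → ℂ) :=
  Matrix.toLin' (Matrix.of fun j i : Fin n =>
    if (i : ℕ) = (j : ℕ) + 1 ∧ (i : ℕ) % 2 = 0 then 1 else 0)

/-- The action of `a` on the co-zigzag module `Z′_n`: `a·e_i = e_{i+1}` for
even `i < n` (1-indexed), all other basis vectors mapped to zero. -/
noncomputable def cozigzagA (n : ℕ) : Module.End ℂ (Fin n → ℂ) :=
  Matrix.toLin' (Matrix.of fun j i : Fin n =>
    if (j : ℕ) = (i : ℕ) + 1 ∧ (i : ℕ) % 2 = 1 then 1 else 0)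

/-- The action of `b` on the co-zigzag module `Z′_n`: `b·e_i = e_{i−1}` for
even `i > 1` (1-indexed), all other basis vectors mapped to zero. -/
noncomputable def cozigzagB (n : ℕ) : Module.End ℂ (Fin n → ℂ) :=
  Matrix.toLin' (Matrix.of fun j i : Fin n =>
    if (i : ℕ) = (j : ℕ) + 1 ∧ (i : ℕ) % 2 = 1 then 1 else 0)

/-- The `m × m` Jordan block `J_m(μ)` with eigenvalue `μ`. -/
def jordan (m : ℕ) (μ : ℂ) : Matrix (Fin m) (Fin m) ℂ :=
  Matrix.of fun i j : Fin m =>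
    if i = j then μ else if (j : ℕ) = (i : ℕ) + 1 then 1 else 0

/-- The action of `a` on the band module `B(m,μ) = ℂ^m ⊕ ℂ^m`:
`a(u,v) = (0,u)`. -/
noncomputable def bandA (m : ℕ) : Module.End ℂ ((Fin m → ℂ) × (Fin m → ℂ)) :=
  LinearMap.prod (0 : ((Fin m → ℂ) × (Fin m → ℂ)) →ₗ[ℂ] (Fin m → ℂ))
    (LinearMap.fst ℂ (Fin m → ℂ) (Fin m → ℂ))

/-- The action of `b` on the band module `B(m,μ) = ℂ^m ⊕ ℂ^m`:
`b(u,v) = (0, J_m(μ)u)`. -/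
noncomputable def bandB (m : ℕ) (μ : ℂ) : Module.End ℂ ((Fin m → ℂ) × (Fin m → ℂ)) :=
  LinearMap.prod (0 : ((Fin m → ℂ) × (Fin m → ℂ)) →ₗ[ℂ] (Fin m → ℂ))
    ((Matrix.toLin' (jordan m μ)).comp (LinearMap.fst ℂ (Fin m → ℂ) (Fin m → ℂ)))

lemma zigzagA_apply_coord (n : ℕ) (v : Fin n → ℂ) (j : Fin n) :
    zigzagA n v j
      = ∑ k : Fin n, (if (j : ℕ) = (k : ℕ) + 1 ∧ (k : ℕ) % 2 = 0 then v k else 0) := by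
  simp [zigzagA, Matrix.toLin'_apply, Matrix.mulVec, dotProduct]

lemma zigzagB_apply_coord (n : ℕ) (v : Fin n → ℂ) (j : Fin n) :
    zigzagB n v j
      = ∑ k : Fin n, (if (k : ℕ) = (j : ℕ) + 1 ∧ (k : ℕ) % 2 = 0 then v k else 0) := by
  simp [zigzagB, Matrix.toLin'_apply, Matrix.mulVec, dotProduct]

lemma zigzagA_coord_even (n : ℕ) (v : Fin n → ℂ) (j : Fin n) (hj : (j : ℕ) % 2 = 0) :
    zigzagA n v j = 0 := by
  rw [zigzagA_apply_coord]
  apply Finset.sum_eq_zero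
  intro k _
  rw [if_neg]
  rintro ⟨h1, h2⟩
  omega

lemma zigzagA_coord_succ (n : ℕ) (v : Fin n → ℂ) (i j : Fin n)
    (hi : (i : ℕ) % 2 = 0) (hj : (j : ℕ) = (i : ℕ) + 1) :
    zigzagA n v j = v i := by
  rw [zigzagA_apply_coord, Finset.sum_eq_single i]
  · rw [if_pos ⟨hj, hi⟩]
  · intro k _ hk
    rw [if_neg]
    rintro ⟨h1, h2⟩
    exact hk (Fin.ext (by omega))
  · intro h; exact absurd (Finset.mem_univ i) h

lemma zigzagB_coord_eq (n : ℕ) (v : Fin n → ℂ) (i j : Fin n)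
    (hi : (i : ℕ) % 2 = 0) (hj : (i : ℕ) = (j : ℕ) + 1) :
    zigzagB n v j = v i := by
  rw [zigzagB_apply_coord, Finset.sum_eq_single i]
  · rw [if_pos ⟨hj, hi⟩]
  · intro k _ hk
    rw [if_neg]
    rintro ⟨h1, h2⟩
    exact hk (Fin.ext (by omega))
  · intro h; exact absurd (Finset.mem_univ i) h

/-- `a` sends `e_i` (even `i`, `i+1 < n`) to `e_{i+1}`. -/
lemma zigzagA_single (n : ℕ) (i : Fin n) (hi : (i : ℕ) % 2 = 0) (h : (i : ℕ) + 1 < n) :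
    zigzagA n (Pi.single i 1) = Pi.single (⟨(i : ℕ) + 1, h⟩ : Fin n) 1 := by
  funext j
  rw [zigzagA_apply_coord, Finset.sum_eq_single i]
  · by_cases hji : (j : ℕ) = (i : ℕ) + 1
    · have hj : j = (⟨(i : ℕ) + 1, h⟩ : Fin n) := Fin.ext hji
      rw [if_pos ⟨hji, hi⟩, Pi.single_eq_same, hj, Pi.single_eq_same]
    · rw [if_neg (by tauto), Pi.single_eq_of_ne (fun hc => hji (by rw [hc])) 1]
  · intro k _ hk
    simp [Pi.single_eq_of_ne hk]
  · intro h; exact absurd (Finset.mem_univ i) h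

/-- `b` sends `e_i` (even `i ≥ 2`) to `e_{i-1}`. -/
lemma zigzagB_single (n : ℕ) (i : Fin n) (hi : (i : ℕ) % 2 = 0) (h1 : 1 ≤ (i : ℕ)) :
    zigzagB n (Pi.single i 1)
      = Pi.single (⟨(i : ℕ) - 1, lt_trans (by omega) i.2⟩ : Fin n) 1 := by
  funext j
  rw [zigzagB_apply_coord, Finset.sum_eq_single i]
  · by_cases hji : (i : ℕ) = (j : ℕ) + 1
    · have hj : j = (⟨(i : ℕ) - 1, lt_trans (by omega) i.2⟩ : Fin n) := Fin.ext (by simp; omega)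
      rw [if_pos ⟨hji, hi⟩, Pi.single_eq_same, hj, Pi.single_eq_same]
    · rw [if_neg (by tauto)]
      rw [Pi.single_eq_of_ne (fun hc : j = _ => hji (by simp [hc]; omega)) 1]
  · intro k _ hk
    simp [Pi.single_eq_of_ne hk]
  · intro h; exact absurd (Finset.mem_univ i) h

/-- `b` kills `e_0`. -/
lemma zigzagB_single_zero (n : ℕ) (i : Fin n) (hi : (i : ℕ) = 0) :
    zigzagB n (Pi.single i 1) = 0 := by
  funext j
  rw [zigzagB_apply_coord]
  apply Finset.sum_eq_zero
  intro k _
  by_cases hk : k = i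
  · rw [if_neg]; rintro ⟨h1, h2⟩; rw [hk] at h1; omega
  · simp [Pi.single_eq_of_ne hk]

section Core

variable {n : ℕ}

/-- Row-even/column-odd entries of a commuting endomorphism vanish. -/
lemma comm_entry_even_odd (F : (Fin n → ℂ) →ₗ[ℂ] (Fin n → ℂ))
    (hFa : ∀ x, F (zigzagA n x) = zigzagA n (F x))
    (i j : Fin n) (hi : (i : ℕ) % 2 = 1) (hj : (j : ℕ) % 2 = 0) :
    F (Pi.single i 1) j = 0 := by
  have h1 : 1 ≤ (i : ℕ) := by omega
  set i₀ : Fin n := ⟨(i : ℕ) - 1, lt_trans (by omega) i.2⟩ with hi₀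
  have hv : (i₀ : ℕ) = (i : ℕ) - 1 := rfl
  have hi₀e : (i₀ : ℕ) % 2 = 0 := by omega
  have hlt : (i₀ : ℕ) + 1 < n := by have := i.2; omega
  have hA : zigzagA n (Pi.single i₀ 1) = Pi.single i 1 := by
    have he : (⟨(i₀ : ℕ) + 1, hlt⟩ : Fin n) = i := Fin.ext (show (i₀ : ℕ) + 1 = (i : ℕ) by omega)
    rw [zigzagA_single n i₀ hi₀e hlt, he]
  rw [← hA, hFa, zigzagA_coord_even n _ j hj]

/-- Column-0 entries in even rows `≥ 2` vanish. -/
lemma comm_entry_col_zero (F : (Fin n → ℂ) →ₗ[ℂ] (Fin n → ℂ))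
    (hFb : ∀ x, F (zigzagB n x) = zigzagB n (F x))
    (z k : Fin n) (hz : (z : ℕ) = 0) (hk : (k : ℕ) % 2 = 0) (hk1 : 1 ≤ (k : ℕ)) :
    F (Pi.single z 1) k = 0 := by
  have hb : zigzagB n (F (Pi.single z 1)) = 0 := by
    rw [← hFb, zigzagB_single_zero n z hz, map_zero]
  have hk0 : (k : ℕ) - 1 < n := lt_trans (by omega) k.2
  have := zigzagB_coord_eq n (F (Pi.single z 1)) k ⟨(k : ℕ) - 1, hk0⟩ hk
    (show (k : ℕ) = ((k : ℕ) - 1) + 1 by omega)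
  rw [hb] at this
  exact this.symm

/-- The diagonal of a commuting endomorphism is constant. -/
lemma comm_diag_const (F : (Fin n → ℂ) →ₗ[ℂ] (Fin n → ℂ))
    (hFa : ∀ x, F (zigzagA n x) = zigzagA n (F x))
    (hFb : ∀ x, F (zigzagB n x) = zigzagB n (F x))
    (z : Fin n) (hz : (z : ℕ) = 0) (i : Fin n) :
    F (Pi.single i 1) i = F (Pi.single z 1) z := by
  suffices H : ∀ m (hm : m < n), F (Pi.single (⟨m, hm⟩ : Fin n) 1) ⟨m, hm⟩
      = F (Pi.single z 1) z by
    have := H (i : ℕ) i.2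
    simpa using this
  intro m
  induction m with
  | zero =>
    intro hm
    have : (⟨0, hm⟩ : Fin n) = z := Fin.ext (show (0:ℕ) = (z:ℕ) by omega)
    rw [this]
  | succ m ih =>
    intro hm
    have hm' : m < n := by omega
    set i' : Fin n := ⟨m + 1, hm⟩ with hi'
    set i₀ : Fin n := ⟨m, hm'⟩ with hi₀
    have step : F (Pi.single i' 1) i' = F (Pi.single i₀ 1) i₀ := by
      rcases Nat.mod_two_eq_zero_or_one m with hme | hmo
      · -- m even : use a
        have hi₀e : (i₀ : ℕ) % 2 = 0 := show m % 2 = 0 from hme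
        have hlt : (i₀ : ℕ) + 1 < n := hm
        have hA : zigzagA n (Pi.single i₀ 1) = Pi.single i' 1 := by
          have he : (⟨(i₀ : ℕ) + 1, hlt⟩ : Fin n) = i' := Fin.ext rfl
          rw [zigzagA_single n i₀ hi₀e hlt, he]
        rw [← hA, hFa]
        exact zigzagA_coord_succ n _ i₀ i' hi₀e rfl
      · -- m odd : use b
        have hie : (i' : ℕ) % 2 = 0 := show (m + 1) % 2 = 0 by omega
        have h1 : 1 ≤ (i' : ℕ) := Nat.succ_le_succ (Nat.zero_le m)
        have hB : zigzagB n (Pi.single i' 1) = Pi.single i₀ 1 := by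
          have he : (⟨(i' : ℕ) - 1, lt_trans (by omega) i'.2⟩ : Fin n) = i₀ := Fin.ext rfl
          rw [zigzagB_single n i' hie h1, he]
        have : F (Pi.single i₀ 1) i₀ = zigzagB n (F (Pi.single i' 1)) i₀ := by
          rw [← hFb, hB]
        rw [this]
        exact (zigzagB_coord_eq n _ i' i₀ hie rfl).symm
    rw [step]
    exact ih hm'

end Core

section Final

variable {n : ℕ}

/-- For an idempotent commuting endomorphism, the corner entry satisfies `c² = c`. -/
lemma comm_idem_corner (F : (Fin n → ℂ) →ₗ[ℂ] (Fin n → ℂ))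
    (hFa : ∀ x, F (zigzagA n x) = zigzagA n (F x))
    (hFb : ∀ x, F (zigzagB n x) = zigzagB n (F x))
    (hFF : ∀ x, F (F x) = F x)
    (z : Fin n) (hz : (z : ℕ) = 0) :
    F (Pi.single z 1) z * F (Pi.single z 1) z = F (Pi.single z 1) z := by
  set w : Fin n → ℂ := F (Pi.single z 1) with hwdef
  have hzev : (z : ℕ) % 2 = 0 := by omega
  have hw : w = ∑ k : Fin n, w k • (Pi.single k 1 : Fin n → ℂ) := by
    funext j
    simp [Finset.sum_apply, Pi.single_apply]
  have h1 : F w = w := hFF (Pi.single z 1)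
  have key : w z = ∑ k : Fin n, w k * F (Pi.single k 1) z := by
    conv_lhs => rw [← h1, hw]
    rw [map_sum, Finset.sum_apply]
    simp
  rw [Finset.sum_eq_single z] at key
  · exact key.symm
  · intro k _ hk
    rcases Nat.mod_two_eq_zero_or_one (k : ℕ) with hke | hko
    · have : w k = 0 := comm_entry_col_zero F hFb z k hz hke
        (by rcases Nat.eq_zero_or_pos (k : ℕ) with h0 | h1
            · exact absurd (Fin.ext (by omega)) hk
            · exact h1)
      rw [this, zero_mul]
    · rw [comm_entry_even_odd F hFa k z hko hzev, mul_zero]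
  · intro h; exact absurd (Finset.mem_univ z) h

/-- The trace of a commuting endomorphism is `n` times the corner entry. -/
lemma comm_trace (F : (Fin n → ℂ) →ₗ[ℂ] (Fin n → ℂ))
    (hFa : ∀ x, F (zigzagA n x) = zigzagA n (F x))
    (hFb : ∀ x, F (zigzagB n x) = zigzagB n (F x))
    (z : Fin n) (hz : (z : ℕ) = 0) :
    LinearMap.trace ℂ (Fin n → ℂ) F = n * F (Pi.single z 1) z := by
  rw [LinearMap.trace_eq_matrix_trace ℂ (Pi.basisFun ℂ (Fin n))]
  rw [Matrix.trace]
  have hdiag : ∀ i : Fin n,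
      Matrix.diag (LinearMap.toMatrix (Pi.basisFun ℂ (Fin n)) (Pi.basisFun ℂ (Fin n)) F) i
        = F (Pi.single z 1) z := by
    intro i
    rw [Matrix.diag_apply, LinearMap.toMatrix_apply]
    simp only [Pi.basisFun_apply, Pi.basisFun_repr]
    exact comm_diag_const F hFa hFb z hz i
  rw [Finset.sum_congr rfl (fun i _ => hdiag i)]
  simp [mul_comm]

/-- Indecomposability of the type I (zigzag) modules of Gelfand–Ponomarev:
for every `n ≥ 1`, the zigzag module `Z_n` is an indecomposable `R`-module,
where `R = ℂ⟨a,b⟩/(a², b², ab, ba)`. -/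
theorem zigzag_indecomposable (n : ℕ) (hn : 1 ≤ n) :
    RIndecomposable (zigzagA n) (zigzagB n) := by
  constructor
  · refine ⟨Pi.single (⟨0, hn⟩ : Fin n) 1, fun h => ?_⟩
    have := congrFun h ⟨0, hn⟩
    simp at this
  intro p q hp hq hpq
  set pr := p.linearProjOfIsCompl q hpq with hpr
  set F : (Fin n → ℂ) →ₗ[ℂ] (Fin n → ℂ) := p.subtype ∘ₗ pr with hF
  have hFmem : ∀ x, F x ∈ p := fun x => (pr x).2
  have hFp : ∀ x ∈ p, F x = x := fun x hx =>
    congrArg Subtype.val (Submodule.linearProjOfIsCompl_apply_left hpq ⟨x, hx⟩)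
  have hFq : ∀ x ∈ q, F x = 0 := fun x hx => by
    have : pr x = 0 := Submodule.projectionOnto_apply_of_mem_right hpq hx
    simp [hF, LinearMap.comp_apply, this]
  have hFF : ∀ x, F (F x) = F x := fun x => hFp _ (hFmem x)
  have hFzero : ∀ x, F x = 0 → x ∈ q := by
    intro x hx
    have : pr x = 0 := Subtype.ext hx
    exact (Submodule.linearProjOfIsCompl_apply_eq_zero_iff hpq).1 this
  have hcomm : ∀ L : Module.End ℂ (Fin n → ℂ), (∀ v ∈ p, L v ∈ p) → (∀ v ∈ q, L v ∈ q) →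
      ∀ x, F (L x) = L (F x) := by
    intro L hLp hLq x
    have hxq : x - F x ∈ q := by
      apply hFzero
      rw [map_sub, hFF, sub_self]
    have hLx : L x = L (F x) + L (x - F x) := by
      rw [← map_add]
      congr 1
      ring
    rw [hLx, map_add, hFp _ (hLp _ (hFmem x)), hFq _ (hLq _ hxq), add_zero]
  have hFa := hcomm (zigzagA n) (fun v hv => (hp v hv).1) (fun v hv => (hq v hv).1)
  have hFb := hcomm (zigzagB n) (fun v hv => (hp v hv).2) (fun v hv => (hq v hv).2)
  set z : Fin n := ⟨0, hn⟩ with hzdef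
  have hz : (z : ℕ) = 0 := rfl
  set c : ℂ := F (Pi.single z 1) z with hcdef
  have hc : c * c = c := comm_idem_corner F hFa hFb hFF z hz
  have hproj : LinearMap.IsProj p F := ⟨hFmem, hFp⟩
  have htr : LinearMap.trace ℂ (Fin n → ℂ) F = (Module.finrank ℂ p : ℂ) := hproj.trace
  have htr2 : LinearMap.trace ℂ (Fin n → ℂ) F = n * c := comm_trace F hFa hFb z hz
  have hc01 : c = 0 ∨ c = 1 := by
    have h' : c * (c - 1) = 0 := by ring_nf; linear_combination hc
    rcases mul_eq_zero.mp h' with h | h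
    · exact Or.inl h
    · exact Or.inr (sub_eq_zero.mp h)
  rcases hc01 with h0 | h1
  · left
    have : (Module.finrank ℂ p : ℂ) = 0 := by rw [← htr, htr2, h0, mul_zero]
    have hfr : Module.finrank ℂ p = 0 := by exact_mod_cast this
    exact Submodule.finrank_eq_zero.mp hfr
  · right
    have : (Module.finrank ℂ p : ℂ) = n := by rw [← htr, htr2, h1, mul_one]
    have hfr : Module.finrank ℂ p = n := by exact_mod_cast this
    have hptop : p = ⊤ := Submodule.eq_top_of_finrank_eq
      (by rw [hfr, Module.finrank_fin_fun])
    have := hpq.inf_eq_bot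
    rwa [hptop, top_inf_eq] at this

end Final
end

section
/- For every m ≥ 1 and every μ ∈ ℂ, the band modules B(m,μ) and B′(m,μ) are indecomposable R-modules. (Indecomposability of the type II modules of Gelfand–Ponomarev, as used in Lemma 1.3.) -/
lemma mul_jordan_apply (m : ℕ) (μ : ℂ) (P : Matrix (Fin m) (Fin m) ℂ) (i j : Fin m) :
    (P * jordan m μ) i j = μ * P i j +
      (if h : 0 < (j : ℕ) then P i ⟨(j : ℕ) - 1, Nat.lt_of_le_of_lt (Nat.sub_le _ _) j.isLt⟩
       else 0) := by
  rw [Matrix.mul_apply]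
  by_cases hj : 0 < (j : ℕ)
  · rw [dif_pos hj]
    set j' : Fin m := ⟨(j : ℕ) - 1, Nat.lt_of_le_of_lt (Nat.sub_le _ _) j.isLt⟩ with hj'
    have hval : (j' : ℕ) = (j : ℕ) - 1 := rfl
    clear_value j'
    clear hj'
    have hne : j' ≠ j := by
      intro h
      have := congrArg (Fin.val) h
      rw [hval] at this
      omega
    have hpt : ∀ k : Fin m, P i k * jordan m μ k j =
        (if k = j then μ * P i j else 0) + (if k = j' then P i j' else 0) := by
      intro k
      by_cases h1 : k = j
      · have h2 : ¬ k = j' := by rw [h1]; exact fun h => hne h.symm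
        have h3 : ¬ ((j : ℕ) = (k : ℕ) + 1) := by rw [h1]; omega
        simp [jordan, h1, h2, h3, Ne.symm hne, mul_comm]
      · by_cases h2 : k = j'
        · have h3 : (j : ℕ) = (k : ℕ) + 1 := by
            rw [h2, hval]; omega
          simp [jordan, h1, h2, h3, hne]
        · have h3 : ¬ ((j : ℕ) = (k : ℕ) + 1) := by
            intro h
            exact h2 (Fin.ext (by rw [hval]; omega))
          simp [jordan, h1, h2, h3]
    rw [Finset.sum_congr rfl (fun k _ => hpt k), Finset.sum_add_distrib,
      Finset.sum_ite_eq' Finset.univ j (fun _ => μ * P i j),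
      Finset.sum_ite_eq' Finset.univ j' (fun _ => P i j')]
    simp
  · rw [dif_neg hj]
    have hpt : ∀ k : Fin m, P i k * jordan m μ k j =
        (if k = j then μ * P i j else 0) := by
      intro k
      by_cases h1 : k = j
      · have h3 : ¬ ((j : ℕ) = (k : ℕ) + 1) := by omega
        simp [jordan, h1, h3, mul_comm]
      · have h3 : ¬ ((j : ℕ) = (k : ℕ) + 1) := by omega
        simp [jordan, h1, h3]
    rw [Finset.sum_congr rfl (fun k _ => hpt k),
      Finset.sum_ite_eq' Finset.univ j (fun _ => μ * P i j)]
    simp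

lemma jordan_mul_apply (m : ℕ) (μ : ℂ) (P : Matrix (Fin m) (Fin m) ℂ) (i j : Fin m) :
    (jordan m μ * P) i j = μ * P i j +
      (if h : (i : ℕ) + 1 < m then P ⟨(i : ℕ) + 1, h⟩ j else 0) := by
  rw [Matrix.mul_apply]
  by_cases hi : (i : ℕ) + 1 < m
  · rw [dif_pos hi]
    set i' : Fin m := ⟨(i : ℕ) + 1, hi⟩ with hi'
    have hval : (i' : ℕ) = (i : ℕ) + 1 := rfl
    clear_value i'
    clear hi'
    have hne : i' ≠ i := by
      intro h
      have := congrArg (Fin.val) h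
      rw [hval] at this
      omega
    have hpt : ∀ k : Fin m, jordan m μ i k * P k j =
        (if k = i then μ * P i j else 0) + (if k = i' then P i' j else 0) := by
      intro k
      by_cases h1 : k = i
      · have h2 : ¬ k = i' := by rw [h1]; exact fun h => hne h.symm
        simp [jordan, h1, Ne.symm hne]
      · have h1' : ¬ i = k := fun h => h1 h.symm
        by_cases h2 : k = i'
        · have h3 : (k : ℕ) = (i : ℕ) + 1 := by rw [h2, hval]
          simp [jordan, h1', h2, h3, hval, hne, Ne.symm hne]
        · have h3 : ¬ ((k : ℕ) = (i : ℕ) + 1) := by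
            intro h
            exact h2 (Fin.ext (by rw [hval]; omega))
          simp [jordan, h1, h1', h2, h3]
    rw [Finset.sum_congr rfl (fun k _ => hpt k), Finset.sum_add_distrib,
      Finset.sum_ite_eq' Finset.univ i (fun _ => μ * P i j),
      Finset.sum_ite_eq' Finset.univ i' (fun _ => P i' j)]
    simp
  · rw [dif_neg hi]
    have hpt : ∀ k : Fin m, jordan m μ i k * P k j =
        (if k = i then μ * P i j else 0) := by
      intro k
      by_cases h1 : k = i
      · simp [jordan, h1]
      · have h1' : ¬ i = k := fun h => h1 h.symm
        have h3 : ¬ ((k : ℕ) = (i : ℕ) + 1) := by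
          have := k.isLt; omega
        simp [jordan, h1, h1', h3]
    rw [Finset.sum_congr rfl (fun k _ => hpt k),
      Finset.sum_ite_eq' Finset.univ i (fun _ => μ * P i j)]
    simp

lemma jordan_comm_rel (m : ℕ) (μ : ℂ) (P : Matrix (Fin m) (Fin m) ℂ)
    (hc : P * jordan m μ = jordan m μ * P) (i j : Fin m) :
    (if h : 0 < (j : ℕ) then P i ⟨(j : ℕ) - 1, Nat.lt_of_le_of_lt (Nat.sub_le _ _) j.isLt⟩
       else 0) = (if h : (i : ℕ) + 1 < m then P ⟨(i : ℕ) + 1, h⟩ j else 0) := by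
  have h1 := mul_jordan_apply m μ P i j
  have h2 := jordan_mul_apply m μ P i j
  have h3 : (P * jordan m μ) i j = (jordan m μ * P) i j := by rw [hc]
  rw [h1, h2] at h3
  exact add_left_cancel h3

lemma Pcongr {m : ℕ} (P : Matrix (Fin m) (Fin m) ℂ) {i i' j j' : Fin m}
    (hi : (i : ℕ) = (i' : ℕ)) (hj : (j : ℕ) = (j' : ℕ)) : P i j = P i' j' := by
  rw [Fin.ext hi, Fin.ext hj]

section
variable {m : ℕ} (hm : 0 < m) {μ : ℂ} (P : Matrix (Fin m) (Fin m) ℂ)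
  (hc : P * jordan m μ = jordan m μ * P)

include hc

lemma jordan_shift : ∀ (i j : Fin m) (hi : (i : ℕ) + 1 < m) (hj : 0 < (j : ℕ)),
    P ⟨(i : ℕ) + 1, hi⟩ j = P i ⟨(j : ℕ) - 1, Nat.lt_of_le_of_lt (Nat.sub_le _ _) j.isLt⟩ := by
  intro i j hi hj
  have := jordan_comm_rel m μ P hc i j
  rw [dif_pos hj, dif_pos hi] at this
  exact this.symm

include hm

lemma jordan_row : ∀ j : Fin m, (j : ℕ) < m - 1 → P ⟨m - 1, by omega⟩ j = 0 := by
  intro j hj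
  have hjlt : (j : ℕ) + 1 < m := by omega
  have := jordan_comm_rel m μ P hc ⟨m - 1, by omega⟩ ⟨(j : ℕ) + 1, hjlt⟩
  rw [dif_pos (by simp), dif_neg (by simp; omega)] at this
  exact (Pcongr P rfl (by simp)).trans this

lemma jordan_lower : ∀ i j : Fin m, (j : ℕ) < (i : ℕ) → P i j = 0 := by
  have aux : ∀ t : ℕ, ∀ i j : Fin m, (i : ℕ) + t + 1 = m → (j : ℕ) < (i : ℕ) → P i j = 0 := by
    intro t
    induction t with
    | zero =>
      intro i j hsum hji
      have : i = ⟨m - 1, by omega⟩ := Fin.ext (by simp; omega)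
      rw [this]
      exact jordan_row hm P hc j (by omega)
    | succ t iht =>
      intro i j hsum hji
      have hi1 : (i : ℕ) + 1 < m := by omega
      have hj1 : (j : ℕ) + 1 < m := by omega
      have hs := jordan_shift P hc i ⟨(j : ℕ) + 1, hj1⟩ hi1 (by simp)
      exact ((Pcongr P rfl (by simp)).trans hs.symm).trans
        (iht ⟨(i : ℕ) + 1, hi1⟩ ⟨(j : ℕ) + 1, hj1⟩ (by simp; omega) (by simp; omega))
  intro i j hji
  exact aux (m - (i : ℕ) - 1) i j (by have := i.isLt; omega) hji

lemma jordan_diag : ∀ i : Fin m, P i i = P ⟨0, hm⟩ ⟨0, hm⟩ := by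
  have aux : ∀ k : ℕ, ∀ h : k < m, P ⟨k, h⟩ ⟨k, h⟩ = P ⟨0, hm⟩ ⟨0, hm⟩ := by
    intro k
    induction k with
    | zero => intro h; rfl
    | succ k ihk =>
      intro h
      have hk : k < m := by omega
      have hs := jordan_shift P hc ⟨k, hk⟩ ⟨k + 1, h⟩ (by simpa using h) (by simp)
      rw [← ihk hk]
      exact ((Pcongr P (by simp) rfl).trans hs).trans (Pcongr P rfl (by simp))
  intro i
  have : i = ⟨(i : ℕ), i.isLt⟩ := Fin.ext rfl
  rw [this]
  exact aux (i : ℕ) i.isLt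

lemma jordan_idem_zero (hI : P * P = P) (h0 : P ⟨0, hm⟩ ⟨0, hm⟩ = 0) : P = 0 := by
  have hdz : ∀ i : Fin m, P i i = 0 := fun i => by rw [jordan_diag hm P hc i, h0]
  have base : ∀ i j : Fin m, (j : ℕ) ≤ (i : ℕ) → P i j = 0 := by
    intro i j hle
    rcases lt_or_eq_of_le hle with h | h
    · exact jordan_lower hm P hc i j h
    · have : j = i := Fin.ext h
      rw [this]; exact hdz i
  have aux : ∀ d : ℕ, ∀ i j : Fin m, (j : ℕ) ≤ (i : ℕ) + d → P i j = 0 := by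
    intro d
    induction d with
    | zero => intro i j h; exact base i j (by omega)
    | succ d ihd =>
      intro i j hle
      have : P i j = (P * P) i j := by rw [hI]
      rw [this, Matrix.mul_apply]
      apply Finset.sum_eq_zero
      intro k _
      by_cases hk : (k : ℕ) ≤ (i : ℕ)
      · rw [base i k hk, zero_mul]
      · rw [ihd k j (by omega), mul_zero]
  ext i j
  simp only [Matrix.zero_apply]
  exact aux m i j (by have := j.isLt; omega)

lemma jordan_idem (hI : P * P = P) : P = 0 ∨ P = 1 := by
  set c := P ⟨0, hm⟩ ⟨0, hm⟩ with hcdef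
  have hcc : c * c = c := by
    have h := congrFun (congrFun hI ⟨0, hm⟩) ⟨0, hm⟩
    rw [Matrix.mul_apply] at h
    rw [Finset.sum_eq_single (⟨0, hm⟩ : Fin m)] at h
    · exact h
    · intro k _ hk
      have : 0 < (k : ℕ) := by
        rcases Nat.eq_zero_or_pos (k : ℕ) with h' | h'
        · exact absurd (Fin.ext h' : k = ⟨0, hm⟩) hk
        · exact h'
      rw [jordan_lower hm P hc k ⟨0, hm⟩ (by simpa)]
      ring
    · intro h; exact absurd (Finset.mem_univ _) h
  have : c = 0 ∨ c = 1 := by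
    have h : c * (c - 1) = 0 := by rw [mul_sub, hcc, mul_one, sub_self]
    rcases mul_eq_zero.mp h with h' | h'
    · exact Or.inl h'
    · exact Or.inr (sub_eq_zero.mp h')
  rcases this with h | h
  · exact Or.inl (jordan_idem_zero hm P hc hI h)
  · right
    have hcQ : (1 - P) * jordan m μ = jordan m μ * (1 - P) := by
      rw [sub_mul, mul_sub, one_mul, mul_one, hc]
    have hIQ : (1 - P) * (1 - P) = 1 - P := by
      rw [sub_mul, one_mul, mul_sub, mul_one, hI]
      abel
    have h0Q : (1 - P) ⟨0, hm⟩ ⟨0, hm⟩ = 0 := by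
      simp [Matrix.one_apply_eq, ← hcdef, h]
    have := jordan_idem_zero hm (1 - P) hcQ hIQ h0Q
    have := sub_eq_zero.mp this
    exact this.symm

end

lemma bandA_apply (m : ℕ) (x : (Fin m → ℂ) × (Fin m → ℂ)) : bandA m x = (0, x.1) := rfl

lemma bandB_apply (m : ℕ) (μ : ℂ) (x : (Fin m → ℂ) × (Fin m → ℂ)) :
    bandB m μ x = (0, Matrix.toLin' (jordan m μ) x.1) := rfl

lemma band_proj_zero (m : ℕ)
    (f : ((Fin m → ℂ) × (Fin m → ℂ)) →ₗ[ℂ] ((Fin m → ℂ) × (Fin m → ℂ)))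
    (ha : ∀ x, f (bandA m x) = bandA m (f x))
    (hI : ∀ x, f (f x) = f x)
    (h0 : ∀ u : Fin m → ℂ, (f (u, 0)).1 = 0) : ∀ x, f x = 0 := by
  have hz : ∀ u : Fin m → ℂ, f (0, u) = 0 := by
    intro u
    have h : f (0, u) = ((0 : Fin m → ℂ), (f (u, 0)).1) := ha (u, 0)
    rw [h, h0 u]
    rfl
  intro x
  have h : f (0, x.1) = ((0 : Fin m → ℂ), (f x).1) := ha x
  rw [hz x.1] at h
  have h1 : (f x).1 = 0 := (congrArg Prod.snd h).symm
  have hx : f x = ((0 : Fin m → ℂ), (f x).2) := by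
    rw [← h1]
  calc f x = f (f x) := (hI x).symm
    _ = f (0, (f x).2) := by rw [← hx]
    _ = 0 := hz _

lemma band_endo (m : ℕ) (hm : 0 < m) (μ : ℂ)
    (f : ((Fin m → ℂ) × (Fin m → ℂ)) →ₗ[ℂ] ((Fin m → ℂ) × (Fin m → ℂ)))
    (ha : ∀ x, f (bandA m x) = bandA m (f x))
    (hb : ∀ x, f (bandB m μ x) = bandB m μ (f x))
    (hI : ∀ x, f (f x) = f x) : (∀ x, f x = 0) ∨ (∀ x, f x = x) := by
  set P : (Fin m → ℂ) →ₗ[ℂ] (Fin m → ℂ) :=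
    (LinearMap.fst ℂ (Fin m → ℂ) (Fin m → ℂ)).comp
      (f.comp (LinearMap.inl ℂ (Fin m → ℂ) (Fin m → ℂ))) with hPdef
  have hPapply : ∀ u : Fin m → ℂ, P u = (f (u, 0)).1 := fun u => rfl
  have key2 : ∀ u : Fin m → ℂ, (f (0, u)).2 = P u := by
    intro u
    have h : f (0, u) = ((0 : Fin m → ℂ), (f (u, 0)).1) := ha (u, 0)
    rw [hPapply]
    exact congrArg Prod.snd h
  have hA1 : ∀ u v : Fin m → ℂ, (f (u, v)).1 = P u := by
    intro u v
    have h : f (0, u) = ((0 : Fin m → ℂ), (f (u, v)).1) := ha (u, v)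
    have h2 : (f (0, u)).2 = (f (u, v)).1 := congrArg Prod.snd h
    rw [key2] at h2
    exact h2.symm
  have hPJ : ∀ u, P (Matrix.toLin' (jordan m μ) u) = Matrix.toLin' (jordan m μ) (P u) := by
    intro u
    have h : f (0, Matrix.toLin' (jordan m μ) u) =
        ((0 : Fin m → ℂ), Matrix.toLin' (jordan m μ) ((f (u, 0)).1)) := hb (u, 0)
    have h2 : (f (0, Matrix.toLin' (jordan m μ) u)).2 =
        Matrix.toLin' (jordan m μ) ((f (u, 0)).1) := congrArg Prod.snd h
    rw [key2] at h2
    rw [h2, hPapply]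
  have hPP : ∀ u, P (P u) = P u := by
    intro u
    have h := hI (u, 0)
    have h3 := hA1 (f (u, 0)).1 (f (u, 0)).2
    rw [Prod.mk.eta] at h3
    have h4 : P ((f (u, 0)).1) = (f (u, 0)).1 := h3.symm.trans (congrArg Prod.fst h)
    rw [hPapply u]
    exact h4
  have hcomp : P ∘ₗ Matrix.toLin' (jordan m μ) = Matrix.toLin' (jordan m μ) ∘ₗ P :=
    LinearMap.ext hPJ
  have hmat : LinearMap.toMatrix' P * jordan m μ = jordan m μ * LinearMap.toMatrix' P := by
    have h := congrArg LinearMap.toMatrix' hcomp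
    rwa [LinearMap.toMatrix'_comp, LinearMap.toMatrix'_comp, LinearMap.toMatrix'_toLin'] at h
  have hmatI : LinearMap.toMatrix' P * LinearMap.toMatrix' P = LinearMap.toMatrix' P := by
    have h : P ∘ₗ P = P := LinearMap.ext hPP
    have h2 := congrArg LinearMap.toMatrix' h
    rwa [LinearMap.toMatrix'_comp] at h2
  rcases jordan_idem hm (LinearMap.toMatrix' P) hmat hmatI with h | h
  · have hP0 : ∀ u, P u = 0 := by
      intro u
      have h2 : P = Matrix.toLin' (LinearMap.toMatrix' P) := (Matrix.toLin'_toMatrix' P).symm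
      rw [h2, h]
      simp
    left
    apply band_proj_zero m f ha hI
    intro u
    rw [← hPapply, hP0]
  · have hPid : ∀ u, P u = u := by
      intro u
      have h2 : P = Matrix.toLin' (LinearMap.toMatrix' P) := (Matrix.toLin'_toMatrix' P).symm
      rw [h2, h]
      simp
    right
    set g : ((Fin m → ℂ) × (Fin m → ℂ)) →ₗ[ℂ] ((Fin m → ℂ) × (Fin m → ℂ)) :=
      LinearMap.id - f with hgdef
    have hgapply : ∀ x, g x = x - f x := fun x => rfl
    have hag : ∀ x, g (bandA m x) = bandA m (g x) := by
      intro x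
      rw [hgapply, hgapply, ha x, map_sub]
    have hIg : ∀ x, g (g x) = g x := by
      intro x
      rw [hgapply (g x), hgapply x, map_sub, hI x]
      abel
    have h0g : ∀ u : Fin m → ℂ, (g (u, 0)).1 = 0 := by
      intro u
      rw [hgapply]
      have : ((u, (0 : Fin m → ℂ)) - f (u, 0)).1 = u - (f (u, 0)).1 := rfl
      rw [this, ← hPapply, hPid, sub_self]
    have hg0 := band_proj_zero m g hag hIg h0g
    intro x
    have h3 := hg0 x
    rw [hgapply] at h3
    exact (sub_eq_zero.mp h3).symm

lemma indecomp_of_proj (V : Type) [AddCommGroup V] [Module ℂ V] (a b : Module.End ℂ V)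
    (hne : ∃ v : V, v ≠ 0)
    (hproj : ∀ f : V →ₗ[ℂ] V, (∀ x, f (a x) = a (f x)) → (∀ x, f (b x) = b (f x)) →
      (∀ x, f (f x) = f x) → (∀ x, f x = 0) ∨ (∀ x, f x = x)) :
    RIndecomposable a b := by
  refine ⟨hne, fun p q hp hq hpq => ?_⟩
  set f : V →ₗ[ℂ] V := p.subtype.comp (p.projectionOnto q hpq) with hf
  have hfp : ∀ x ∈ p, f x = x := by
    intro x hx
    have := Submodule.linearProjOfIsCompl_apply_left hpq ⟨x, hx⟩
    simp only [hf, LinearMap.comp_apply, Submodule.coe_subtype]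
    rw [this]
  have hfq : ∀ x ∈ q, f x = 0 := by
    intro x hx
    have := Submodule.linearProjOfIsCompl_apply_right hpq ⟨x, hx⟩
    simp only [hf, LinearMap.comp_apply, Submodule.coe_subtype]
    rw [this]
    rfl
  have hfmem : ∀ x, f x ∈ p := fun x => SetLike.coe_mem _
  have hdec : ∀ v : V, ∃ x ∈ p, ∃ y ∈ q, v = x + y := by
    intro v
    have hv : v ∈ p ⊔ q := by rw [hpq.sup_eq_top]; trivial
    obtain ⟨x, hx, y, hy, hxy⟩ := Submodule.mem_sup.mp hv
    exact ⟨x, hx, y, hy, hxy.symm⟩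
  have hcomm : ∀ c : Module.End ℂ V, (∀ v ∈ p, c v ∈ p) → (∀ v ∈ q, c v ∈ q) →
      ∀ v, f (c v) = c (f v) := by
    intro c hcp hcq v
    obtain ⟨x, hx, y, hy, hv⟩ := hdec v
    rw [hv, map_add, map_add, map_add, hfp x hx, hfq y hy, hfp _ (hcp x hx),
      hfq _ (hcq y hy), add_zero, map_add, map_zero, add_zero]
  have hidem : ∀ x, f (f x) = f x := fun x => hfp _ (hfmem x)
  rcases hproj f (hcomm a (fun v hv => (hp v hv).1) (fun v hv => (hq v hv).1))
      (hcomm b (fun v hv => (hp v hv).2) (fun v hv => (hq v hv).2)) hidem with h | h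
  · left
    rw [eq_bot_iff]
    intro x hx
    exact (Submodule.mem_bot ℂ).mpr ((hfp x hx).symm.trans (h x))
  · right
    rw [eq_bot_iff]
    intro x hx
    exact (Submodule.mem_bot ℂ).mpr ((h x).symm.trans (hfq x hx))

/-- Indecomposability of the type II (band) modules of Gelfand–Ponomarev:
for every `m ≥ 1` and `μ ∈ ℂ`, the band modules `B(m,μ)` (with
`a(u,v) = (0,u)`, `b(u,v) = (0,J_m(μ)u)`) and `B′(m,μ)` (with
`a(u,v) = (0,J_m(μ)u)`, `b(u,v) = (0,u)`) are indecomposable `R`-modules. -/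
theorem band_indecomposable (m : ℕ) (hm : 1 ≤ m) (μ : ℂ) :
    RIndecomposable (bandA m) (bandB m μ) ∧ RIndecomposable (bandB m μ) (bandA m) := by
  have hm' : 0 < m := hm
  have hne : ∃ v : (Fin m → ℂ) × (Fin m → ℂ), v ≠ 0 := by
    refine ⟨(Pi.single ⟨0, hm'⟩ 1, 0), ?_⟩
    intro h
    have h1 := congrArg Prod.fst h
    have h2 := congrFun h1 ⟨0, hm'⟩
    simp [Pi.single_eq_same] at h2
  constructor
  · exact indecomp_of_proj _ _ _ hne
      (fun f ha hb hI => band_endo m hm' μ f ha hb hI)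
  · exact indecomp_of_proj _ _ _ hne
      (fun f hb ha hI => band_endo m hm' μ f ha hb hI)
end

section
/- For m, m′ ≥ 1 and μ, μ′ ∈ ℂ, the band modules B(m,μ) and B(m′,μ′) are isomorphic as R-modules if and only if m = m′ and μ = μ′. (The parameter μ of a type II module is an isomorphism invariant.) -/
/-- The parameter `μ` (and size `m`) of a type II band module is an isomorphism
invariant: for `m, m′ ≥ 1` and `μ, μ′ ∈ ℂ`, the band modules `B(m,μ)` and
`B(m′,μ′)` are isomorphic as `R`-modules if and only if `m = m′` and `μ = μ′`. -/
theorem band_iso_iff (m m' : ℕ) (hm : 1 ≤ m) (hm' : 1 ≤ m') (μ μ' : ℂ) :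
    RModIso (bandA m) (bandB m μ) (bandA m') (bandB m' μ') ↔ m = m' ∧ μ = μ' := by
  constructor
  · rintro ⟨e, ha, hb⟩
    -- From intertwining with `a`: e (0, u) = (0, (e (u,v)).1) for all u, v.
    have key : ∀ u v : Fin m → ℂ, e (0, u) = (0, (e (u, v)).1) := by
      intro u v
      have := ha (u, v)
      simpa [bandA] using this
    -- Define P u := (e (u,0)).1; then e (0,u) = (0, P u).
    set P : (Fin m → ℂ) →ₗ[ℂ] (Fin m' → ℂ) :=
      (LinearMap.fst ℂ (Fin m' → ℂ) (Fin m' → ℂ)).comp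
        ((e : ((Fin m → ℂ) × (Fin m → ℂ)) →ₗ[ℂ] ((Fin m' → ℂ) × (Fin m' → ℂ))).comp
          (LinearMap.inl ℂ (Fin m → ℂ) (Fin m → ℂ))) with hPdef
    have hP : ∀ u : Fin m → ℂ, e (0, u) = (0, P u) := by
      intro u; simpa [hPdef] using key u 0
    -- Intertwining with `b` gives P ∘ J = J' ∘ P.
    have hPJ : ∀ u : Fin m → ℂ,
        P (Matrix.toLin' (jordan m μ) u) = Matrix.toLin' (jordan m' μ') (P u) := by
      intro u
      have h1 := hb (u, 0)
      have h2 : e (0, Matrix.toLin' (jordan m μ) u)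
          = (0, Matrix.toLin' (jordan m' μ') (P u)) := by
        simpa [bandB, hPdef] using h1
      have h3 := hP (Matrix.toLin' (jordan m μ) u)
      rw [h3] at h2
      exact congrArg Prod.snd h2
    -- P is injective.
    have hinj : Function.Injective P := by
      intro u u' huv
      have : e (0, u) = e (0, u') := by rw [hP, hP, huv]
      have := e.injective this
      simpa using congrArg Prod.snd this
    -- P is surjective.
    have hsurj : Function.Surjective P := by
      intro w
      refine ⟨(e.symm (w, 0)).1, ?_⟩
      have h1 := key (e.symm (w, 0)).1 (e.symm (w, 0)).2
      rw [hP] at h1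
      have h2 : (e ((e.symm (w, 0)).1, (e.symm (w, 0)).2)).1 = w := by
        simp
      rw [h2] at h1
      exact congrArg Prod.snd h1
    let Pe : (Fin m → ℂ) ≃ₗ[ℂ] (Fin m' → ℂ) := LinearEquiv.ofBijective P ⟨hinj, hsurj⟩
    have hmm : m = m' := by
      have := Pe.finrank_eq
      rwa [Module.finrank_fin_fun, Module.finrank_fin_fun] at this
    subst hmm
    refine ⟨rfl, ?_⟩
    -- traces of similar Jordan blocks agree
    have hconj : Pe.conj (Matrix.toLin' (jordan m μ)) = Matrix.toLin' (jordan m μ') := by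
      apply LinearMap.ext
      intro x
      obtain ⟨u, rfl⟩ := Pe.surjective x
      have : Pe.symm (Pe u) = u := Pe.symm_apply_apply u
      simp only [LinearEquiv.conj_apply, LinearMap.comp_apply, LinearEquiv.coe_coe, this]
      exact hPJ u
    have htr : LinearMap.trace ℂ _ (Matrix.toLin' (jordan m μ))
        = LinearMap.trace ℂ _ (Matrix.toLin' (jordan m μ')) := by
      rw [← hconj, LinearMap.trace_conj']
    have htr' : ∀ ν : ℂ, LinearMap.trace ℂ (Fin m → ℂ) (Matrix.toLin' (jordan m ν))
        = (m : ℂ) * ν := by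
      intro ν
      rw [LinearMap.trace_eq_matrix_trace ℂ (Pi.basisFun ℂ (Fin m)),
        LinearMap.toMatrix_eq_toMatrix', LinearMap.toMatrix'_toLin']
      simp [Matrix.trace, jordan, Matrix.diag, mul_comm]
    rw [htr' μ, htr' μ'] at htr
    have hm0 : (m : ℂ) ≠ 0 := Nat.cast_ne_zero.mpr (by omega)
    exact mul_left_cancel₀ hm0 htr
  · rintro ⟨rfl, rfl⟩
    exact ⟨LinearEquiv.refl ℂ _, fun v => rfl, fun v => rfl⟩
end
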